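/- Let G be a topological group. The map Φ : G⁴ × G⁴ → G⁸ defined by Φ(A₀, ν) = F_ν(i(A₀)) is a homeomorphism satisfying π₁ ∘ Φ = pr₁ (projection onto the first factor). Hence (G⁸, π₁, G⁴) is a trivial principal G⁴-fiber bundle with global section i. -/

import Mathlib

/-- The refining map `i : G⁴ → G⁸` of the minimal example. -/
def refiningMap {G : Type*} [Group G] :
    G × G × G × G → G × G × G × G × G × G × G × G :=
  fun (g₁, g₂, g₃, g₄) => (g₁, g₂, g₂, g₂, g₃, 1, 1, g₄)

/-- The coarse graining map `π₁ : G⁸ → G⁴`. -/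
def coarse₁ {G : Type*} [Group G] :
    G × G × G × G × G × G × G × G → G × G × G × G :=
  fun (g₁, g₂, _g₃, _g₄, g₅, g₆, g₇, g₈) => (g₁, g₂, g₅, g₈ * g₇⁻¹ * g₆)

/-- The family of maps `F_ν : G⁸ → G⁸` for `ν = (ν₃,ν₄,ν_c,ν_e) ∈ G⁴`. -/
def Fmap {G : Type*} [Group G] :
    G × G × G × G → (G × G × G × G × G × G × G × G) → G × G × G × G × G × G × G × G :=
  fun (ν₃, ν₄, νc, νe) (g₁, g₂, g₃, g₄, g₅, g₆, g₇, g₈) =>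
    (g₁, g₂, νc * g₃ * ν₃⁻¹, νe * g₄ * ν₄⁻¹, g₅, νc * g₆, νc * g₇ * νe⁻¹, g₈ * νe⁻¹)

/-- For a topological group `G`, the map `Φ : G⁴ × G⁴ → G⁸`,
`Φ(A₀, ν) = F_ν(i(A₀))`, is a homeomorphism satisfying `π₁ ∘ Φ = pr₁`.
Hence `(G⁸, π₁, G⁴)` is a trivial principal `G⁴`-fiber bundle with
global section `i`. -/
theorem trivial_bundle_structure {G : Type*} [Group G] [TopologicalSpace G]
    [IsTopologicalGroup G] :
    ∃ Φ : ((G × G × G × G) × (G × G × G × G)) ≃ₜ (G × G × G × G × G × G × G × G),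
      (∀ p : (G × G × G × G) × (G × G × G × G), Φ p = Fmap p.2 (refiningMap p.1)) ∧
      ∀ p : (G × G × G × G) × (G × G × G × G), coarse₁ (Φ p) = p.1 := by
  refine ⟨{
    toFun := fun p => Fmap p.2 (refiningMap p.1)
    invFun := fun h =>
      ((h.1, h.2.1, h.2.2.2.2.1, h.2.2.2.2.2.2.2 * (h.2.2.2.2.2.2.1)⁻¹ * h.2.2.2.2.2.1),
       (h.2.2.1⁻¹ * h.2.2.2.2.2.1 * h.2.1,
        h.2.2.2.1⁻¹ * (h.2.2.2.2.2.2.1)⁻¹ * h.2.2.2.2.2.1 * h.2.1,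
        h.2.2.2.2.2.1,
        (h.2.2.2.2.2.2.1)⁻¹ * h.2.2.2.2.2.1))
    left_inv := by
      rintro ⟨⟨g₁, g₂, g₃, g₄⟩, ⟨ν₃, ν₄, νc, νe⟩⟩
      simp [Fmap, refiningMap, mul_assoc]
    right_inv := by
      rintro ⟨h₁, h₂, h₃, h₄, h₅, h₆, h₇, h₈⟩
      simp [Fmap, refiningMap, mul_assoc]
    continuous_toFun := by
      simp only [Fmap, refiningMap]
      fun_prop
    continuous_invFun := by fun_prop }, fun p => rfl, ?_⟩
  rintro ⟨⟨g₁, g₂, g₃, g₄⟩, ⟨ν₃, ν₄, νc, νe⟩⟩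
  simp [Fmap, refiningMap, coarse₁, mul_assoc]
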